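/- arXiv:2005.01324 — 3 statements merged into one kernel-verified Lean document; each statement's English description precedes it below -/
import Mathlib

section
/- Let X be a spherical three-distance set in ℝ^23 whose three inner product values are −1/3, 0 and 1/3. Then |X| ≤ 2300 (indeed 2300 = h₁ + h₃ = 23 + 2277 where h_k = C(23+k−1, k) − C(23+k−3, k−2)). -/
open scoped InnerProductSpace
open Finset

/-- The set of inner products between distinct points of `X`. -/
def innerProdSet {n : ℕ} (X : Finset (EuclideanSpace ℝ (Fin n))) : Set ℝ :=
  {t : ℝ | ∃ x ∈ X, ∃ y ∈ X, x ≠ y ∧ ⟪x, y⟫_ℝ = t}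

/-- `X` is a spherical three-distance set in `ℝ^n`. -/
def IsSphericalThreeDistSet {n : ℕ} (X : Finset (EuclideanSpace ℝ (Fin n))) : Prop :=
  (∀ x ∈ X, ‖x‖ = 1) ∧ (innerProdSet X).ncard = 3

/-- Dimension of the space of harmonic homogeneous polynomials of degree `k` in
`n` variables: `C(n+k−1,k) − C(n+k−3,k−2)` (second term read as `0` for `k < 2`). -/
def hdim (n k : ℕ) : ℕ :=
  (n + k - 1).choose k - if 2 ≤ k then (n + k - 3).choose (k - 2) else 0

/-- map a triple to its multiset in `Sym _ 3` -/
def tripSym {n : ℕ} (p : Fin n × Fin n × Fin n) : Sym (Fin n) 3 :=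
  ⟨p.1 ::ₘ p.2.1 ::ₘ {p.2.2}, by simp⟩

noncomputable def cnt {n : ℕ} (m : Sym (Fin n) 3) : ℕ :=
  (Finset.univ.filter (fun p => tripSym p = m)).card

lemma key_sum {n : ℕ} (a : Fin n → ℝ) :
    (∑ i, a i) ^ 3 = ∑ m : Sym (Fin n) 3, (cnt m : ℝ) * ((m : Multiset (Fin n)).map a).prod := by
  classical
  have h1 : (∑ i, a i) ^ 3
      = ∑ p : Fin n × Fin n × Fin n, a p.1 * a p.2.1 * a p.2.2 := by
    simp only [Fintype.sum_prod_type, ← Finset.sum_mul, ← Finset.mul_sum]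
    ring
  rw [h1, ← Finset.sum_fiberwise Finset.univ tripSym]
  refine Finset.sum_congr rfl fun m _ => ?_
  have : ∀ p ∈ Finset.univ.filter (fun p => tripSym p = m),
      a p.1 * a p.2.1 * a p.2.2 = ((m : Multiset (Fin n)).map a).prod := by
    intro p hp
    have hm : (tripSym p : Multiset (Fin n)) = (m : Multiset (Fin n)) := by
      rw [(Finset.mem_filter.1 hp).2]
    rw [← hm]
    simp [tripSym, mul_assoc]
  rw [Finset.sum_congr rfl this, Finset.sum_const, cnt, nsmul_eq_mul]

noncomputable def cubeVec {n : ℕ} (x : EuclideanSpace ℝ (Fin n)) :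
    EuclideanSpace ℝ (Sym (Fin n) 3) :=
  WithLp.toLp 2 (fun m => Real.sqrt (cnt m) * ((m : Multiset (Fin n)).map x).prod)

lemma inner_cubeVec {n : ℕ} (x y : EuclideanSpace ℝ (Fin n)) :
    ⟪cubeVec x, cubeVec y⟫_ℝ = ⟪x, y⟫_ℝ ^ 3 := by
  rw [PiLp.inner_apply, PiLp.inner_apply]
  simp only [RCLike.inner_apply, conj_trivial, cubeVec, PiLp.toLp_apply]
  rw [key_sum (fun i => y i * x i)]
  refine Finset.sum_congr rfl fun m _ => ?_
  rw [Multiset.prod_map_mul]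
  have : Real.sqrt (cnt m) * Real.sqrt (cnt m) = (cnt m : ℝ) :=
    Real.mul_self_sqrt (Nat.cast_nonneg _)
  rw [show √(cnt m) * (Multiset.map y ↑m).prod * (√(cnt m) * (Multiset.map x ↑m).prod)
      = √(cnt m) * √(cnt m) * ((Multiset.map y ↑m).prod * (Multiset.map x ↑m).prod) by ring, this]

local notation "E" => EuclideanSpace ℝ (Fin 23)

theorem three_dist_bound_dim23_specific (X : Finset (EuclideanSpace ℝ (Fin 23)))
    (hX : IsSphericalThreeDistSet X)
    (hD : innerProdSet X = {-(1/3 : ℝ), 0, 1/3}) :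
    X.card ≤ 2300 ∧ 2300 = hdim 23 1 + hdim 23 3 ∧ hdim 23 1 = 23 ∧ hdim 23 3 = 2277 := by
  refine ⟨?_, by decide, by decide, by decide⟩
  classical
  obtain ⟨hnorm, -⟩ := hX
  have hli : LinearIndependent ℝ (fun z : {x // x ∈ X} => cubeVec (z : E)) := by
    rw [linearIndependent_iff']
    intro s g hg i hi
    have h0 : ⟪(∑ j ∈ s, g j • cubeVec (j : E)), (∑ k ∈ s, g k • cubeVec (k : E))⟫_ℝ = 0 := by
      rw [hg]; simp
    rw [sum_inner] at h0
    simp_rw [inner_sum, real_inner_smul_left, real_inner_smul_right, inner_cubeVec] at h0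
    have hterm : ∀ j ∈ s, ∀ k ∈ s, g j * (g k * (⟪(j : E), (k : E)⟫_ℝ)^3)
        = (1/9) * (g j * (g k * ⟪(j : E), (k : E)⟫_ℝ))
          + (if k = j then (8/9) * g j ^ 2 else 0) := by
      intro j _ k _
      by_cases hjk : k = j
      · subst hjk
        have h1 : ⟪(k : E), (k : E)⟫_ℝ = 1 := by
          rw [real_inner_self_eq_norm_sq, hnorm _ k.2]; norm_num
        rw [h1, if_pos rfl]; ring
      · have hne : (j : E) ≠ (k : E) := fun h => hjk (Subtype.ext h.symm)
        have hmem : ⟪(j : E), (k : E)⟫_ℝ ∈ innerProdSet X :=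
          ⟨(j : E), j.2, (k : E), k.2, hne, rfl⟩
        rw [hD] at hmem
        simp only [Set.mem_insert_iff, Set.mem_singleton_iff] at hmem
        rw [if_neg hjk]
        rcases hmem with h | h | h <;> rw [h] <;> ring
    rw [Finset.sum_congr rfl (fun j hj => Finset.sum_congr rfl (hterm j hj))] at h0
    rw [show (∑ j ∈ s, ∑ k ∈ s, ((1/9) * (g j * (g k * ⟪(j : E), (k : E)⟫_ℝ))
          + (if k = j then (8/9) * g j ^ 2 else 0)))
        = (∑ j ∈ s, ∑ k ∈ s, (1/9) * (g j * (g k * ⟪(j : E), (k : E)⟫_ℝ)))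
          + ∑ j ∈ s, ∑ k ∈ s, (if k = j then (8/9) * g j ^ 2 else 0) by
      rw [← Finset.sum_add_distrib]
      exact Finset.sum_congr rfl fun j _ => by rw [← Finset.sum_add_distrib]] at h0
    simp_rw [Finset.sum_ite_eq'] at h0
    rw [Finset.sum_congr rfl (fun j hj => by rw [if_pos hj] :
      ∀ j ∈ s, (if j ∈ s then (8/9) * g j ^ 2 else 0) = (8/9) * g j ^ 2)] at h0
    have hA : ∑ j ∈ s, ∑ k ∈ s, (1/9) * (g j * (g k * ⟪(j : E), (k : E)⟫_ℝ))
        = (1/9) * ⟪(∑ j ∈ s, g j • (j : E)), (∑ k ∈ s, g k • (k : E))⟫_ℝ := by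
      rw [sum_inner, Finset.mul_sum]
      refine Finset.sum_congr rfl fun j _ => ?_
      rw [inner_sum, Finset.mul_sum]
      refine Finset.sum_congr rfl fun k _ => ?_
      rw [real_inner_smul_left, real_inner_smul_right]
    rw [hA] at h0
    have hinner : (0:ℝ) ≤ ⟪(∑ j ∈ s, g j • (j : E)), (∑ k ∈ s, g k • (k : E))⟫_ℝ :=
      real_inner_self_nonneg
    have hsq : ∀ j ∈ s, (0:ℝ) ≤ (8/9) * g j ^ 2 := fun j _ => by positivity
    have hzero : ∑ j ∈ s, (8/9) * g j ^ 2 = 0 := by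
      have hs := Finset.sum_nonneg hsq
      linarith
    have := (Finset.sum_eq_zero_iff_of_nonneg hsq).1 hzero i hi
    have : g i ^ 2 = 0 := by linarith
    exact pow_eq_zero_iff (by norm_num) |>.1 this
  have hcard := hli.fintype_card_le_finrank
  rw [Fintype.card_coe, finrank_euclideanSpace] at hcard
  calc X.card ≤ Fintype.card (Sym (Fin 23) 3) := hcard
    _ = 2300 := by rw [Sym.card_sym_eq_choose]; decide
end

section
/- Let n ≥ 2 and let X be any finite set of unit vectors in ℝ^n. Then for every natural number k, Σ_{(x,y) ∈ X×X} G_k^n(⟨x,y⟩) ≥ 0, where the sum is over all ordered pairs (including x = y). -/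
open scoped InnerProductSpace

/-- The Gegenbauer polynomials `G_k^n`. -/
noncomputable def Geg (n : ℕ) : ℕ → ℝ → ℝ
  | 0, _ => 1
  | 1, t => t
  | (k+2), t =>
      ((2 * ((k : ℝ) + 2) + n - 4) * t * Geg n (k+1) t - ((k : ℝ) + 1) * Geg n k t) /
        ((k : ℝ) + 2 + n - 3)

namespace DelsarteAux

open MvPolynomial Finset

variable {n : ℕ}

/-- The linear form `w ↦ ⟨x, w⟩` as a polynomial. -/
noncomputable def sx (x : Fin n → ℝ) : MvPolynomial (Fin n) ℝ := ∑ i, C (x i) * X i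

/-- The squared norm polynomial. -/
noncomputable def rho (n : ℕ) : MvPolynomial (Fin n) ℝ := ∑ i : Fin n, X i * X i

/-- Directional derivative. -/
noncomputable def Dop (x : Fin n → ℝ) (p : MvPolynomial (Fin n) ℝ) : MvPolynomial (Fin n) ℝ :=
  ∑ i, C (x i) * pderiv i p

/-- Laplacian. -/
noncomputable def Lap (p : MvPolynomial (Fin n) ℝ) : MvPolynomial (Fin n) ℝ :=
  ∑ i, pderiv i (pderiv i p)

/-- Euler operator. -/
noncomputable def Eop (p : MvPolynomial (Fin n) ℝ) : MvPolynomial (Fin n) ℝ :=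
  ∑ i, X i * pderiv i p

/-- Factorial weight of a multi-index. -/
noncomputable def wt (α : Fin n →₀ ℕ) : ℝ := ∏ i, (Nat.factorial (α i) : ℝ)

lemma wt_nonneg (α : Fin n →₀ ℕ) : 0 ≤ wt α :=
  Finset.prod_nonneg fun i _ => by positivity

/-- The apolar pairing. -/
noncomputable def Bf (p q : MvPolynomial (Fin n) ℝ) : ℝ :=
  ∑ α ∈ p.support, wt α * coeff α p * coeff α q

lemma Bf_eq_sum {p q : MvPolynomial (Fin n) ℝ} {s : Finset (Fin n →₀ ℕ)}
    (hs : p.support ⊆ s) : Bf p q = ∑ α ∈ s, wt α * coeff α p * coeff α q := by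
  refine Finset.sum_subset hs fun α _ hα => ?_
  rw [MvPolynomial.notMem_support_iff.mp hα]; ring

lemma Bf_symm (p q : MvPolynomial (Fin n) ℝ) : Bf p q = Bf q p := by
  rw [Bf_eq_sum (Finset.subset_union_left (s₂ := q.support)),
    Bf_eq_sum (Finset.subset_union_right (s₁ := p.support)), Finset.union_comm]
  exact Finset.sum_congr rfl fun α _ => by ring

lemma Bf_zero_left (q : MvPolynomial (Fin n) ℝ) : Bf 0 q = 0 := by
  simp [Bf]

lemma Bf_add_left (p p' q : MvPolynomial (Fin n) ℝ) :
    Bf (p + p') q = Bf p q + Bf p' q := by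
  classical
  rw [Bf_eq_sum (MvPolynomial.support_add),
    Bf_eq_sum (Finset.subset_union_left (s₂ := p'.support)),
    Bf_eq_sum (Finset.subset_union_right (s₁ := p.support)), ← Finset.sum_add_distrib]
  exact Finset.sum_congr rfl fun α _ => by rw [coeff_add]; ring

lemma Bf_add_right (p q q' : MvPolynomial (Fin n) ℝ) :
    Bf p (q + q') = Bf p q + Bf p q' := by
  rw [Bf_symm, Bf_add_left, Bf_symm q p, Bf_symm q' p]

lemma Bf_Cmul_left (c : ℝ) (p q : MvPolynomial (Fin n) ℝ) :
    Bf (C c * p) q = c * Bf p q := by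
  have hs : (C c * p).support ⊆ p.support := by
    rw [← MvPolynomial.smul_eq_C_mul]
    exact MvPolynomial.support_smul
  rw [Bf_eq_sum hs, Bf, Finset.mul_sum]
  exact Finset.sum_congr rfl fun α _ => by rw [coeff_C_mul]; ring

lemma Bf_Cmul_right (c : ℝ) (p q : MvPolynomial (Fin n) ℝ) :
    Bf p (C c * q) = c * Bf p q := by
  rw [Bf_symm, Bf_Cmul_left, Bf_symm]

lemma Bf_monomial_left (α : Fin n →₀ ℕ) (a : ℝ) (q : MvPolynomial (Fin n) ℝ) :
    Bf (monomial α a) q = wt α * a * coeff α q := by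
  rw [Bf_eq_sum (MvPolynomial.support_monomial_subset), Finset.sum_singleton,
    MvPolynomial.coeff_monomial, if_pos rfl]

lemma Bf_one_one : Bf (1 : MvPolynomial (Fin n) ℝ) 1 = 1 := by
  have h := Bf_monomial_left (0 : Fin n →₀ ℕ) (1 : ℝ) (1 : MvPolynomial (Fin n) ℝ)
  rw [MvPolynomial.monomial_zero' ] at h
  simpa [wt] using h

lemma Bf_self_nonneg (p : MvPolynomial (Fin n) ℝ) : 0 ≤ Bf p p := by
  refine Finset.sum_nonneg fun α _ => ?_
  rw [mul_assoc]
  exact mul_nonneg (wt_nonneg α) (mul_self_nonneg _)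

lemma Bf_sum_left {ι : Type*} (S : Finset ι) (f : ι → MvPolynomial (Fin n) ℝ)
    (q : MvPolynomial (Fin n) ℝ) : Bf (∑ i ∈ S, f i) q = ∑ i ∈ S, Bf (f i) q := by
  classical
  induction S using Finset.cons_induction with
  | empty => simpa using Bf_zero_left q
  | cons a s ha ih => rw [Finset.sum_cons, Finset.sum_cons, Bf_add_left, ih]

lemma Bf_sum_right {ι : Type*} (S : Finset ι) (f : ι → MvPolynomial (Fin n) ℝ)
    (p : MvPolynomial (Fin n) ℝ) : Bf p (∑ i ∈ S, f i) = ∑ i ∈ S, Bf p (f i) := by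
  rw [Bf_symm, Bf_sum_left]
  exact Finset.sum_congr rfl fun i _ => Bf_symm _ _

lemma wt_sub_single {α : Fin n →₀ ℕ} {i : Fin n} (h : α i ≠ 0) :
    wt α = (α i) * wt (α - Finsupp.single i 1) := by
  rw [wt, wt, ← Finset.prod_erase_mul _ _ (Finset.mem_univ i),
    ← Finset.prod_erase_mul _ _ (Finset.mem_univ i)]
  have h1 : (α - Finsupp.single i 1 : Fin n →₀ ℕ) i = α i - 1 := by
    simp [Finsupp.tsub_apply]
  have h2 : ∀ j ∈ Finset.univ.erase i,
      (Nat.factorial ((α - Finsupp.single i 1 : Fin n →₀ ℕ) j) : ℝ) = (Nat.factorial (α j) : ℝ) := by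
    intro j hj
    have hji : j ≠ i := (Finset.mem_erase.mp hj).1
    rw [Finsupp.tsub_apply, Finsupp.single_apply, if_neg (Ne.symm hji)]
    simp
  rw [h1, Finset.prod_congr rfl h2]
  have h3 : ((α i : ℝ)) * (Nat.factorial (α i - 1) : ℝ) = (Nat.factorial (α i) : ℝ) := by
    rw [← Nat.cast_mul, Nat.mul_factorial_pred h]
  rw [← h3]
  ring

/-- The key adjointness: multiplication by `X i` is adjoint to `∂ i`. -/
lemma Bf_adj (i : Fin n) (p q : MvPolynomial (Fin n) ℝ) :
    Bf p (X i * q) = Bf (pderiv i p) q := by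
  classical
  induction p using MvPolynomial.induction_on' with
  | add p p' hp hp' => rw [Bf_add_left, map_add, Bf_add_left, hp, hp']
  | monomial α a =>
    rw [Bf_monomial_left, pderiv_monomial, Bf_monomial_left, MvPolynomial.coeff_X_mul']
    by_cases h : i ∈ α.support
    · rw [if_pos h]
      have hne : α i ≠ 0 := Finsupp.mem_support_iff.mp h
      rw [wt_sub_single hne]; ring
    · rw [if_neg h]
      have h0 : α i = 0 := Finsupp.notMem_support_iff.mp h
      rw [h0]; push_cast; ring

lemma pderiv_sx (i : Fin n) (x : Fin n → ℝ) : pderiv i (sx x) = C (x i) := by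
  classical
  rw [sx, map_sum, Finset.sum_eq_single i]
  · rw [pderiv_C_mul, pderiv_X_self, mul_one]
  · intro j _ hj
    rw [pderiv_C_mul, pderiv_X, Pi.single_eq_of_ne hj]
    simp
  · simp

lemma pderiv_rho (i : Fin n) : pderiv i (rho n) = 2 * X i := by
  classical
  rw [rho, map_sum, Finset.sum_eq_single i]
  · rw [pderiv_mul, pderiv_X_self]; ring
  · intro j _ hj
    rw [pderiv_mul, pderiv_X, Pi.single_eq_of_ne hj]
    simp
  · simp

lemma two_eq_C : (2 : MvPolynomial (Fin n) ℝ) = C 2 := by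
  rw [map_ofNat]

lemma Dop_add (x : Fin n → ℝ) (p q : MvPolynomial (Fin n) ℝ) :
    Dop x (p + q) = Dop x p + Dop x q := by
  simp [Dop, map_add, mul_add, Finset.sum_add_distrib]

lemma Dop_Cmul (x : Fin n → ℝ) (c : ℝ) (p : MvPolynomial (Fin n) ℝ) :
    Dop x (C c * p) = C c * Dop x p := by
  simp only [Dop, pderiv_C_mul, Finset.mul_sum]
  exact Finset.sum_congr rfl fun i _ => by ring

lemma Dop_mul (x : Fin n → ℝ) (p q : MvPolynomial (Fin n) ℝ) :
    Dop x (p * q) = Dop x p * q + p * Dop x q := by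
  simp only [Dop, pderiv_mul, mul_add, Finset.sum_add_distrib, Finset.sum_mul, Finset.mul_sum]
  congr 1
  · exact Finset.sum_congr rfl fun i _ => by ring
  · exact Finset.sum_congr rfl fun i _ => by ring

lemma Dop_one (x : Fin n → ℝ) : Dop x (1 : MvPolynomial (Fin n) ℝ) = 0 := by
  simp [Dop]

lemma Dop_sx (x y : Fin n → ℝ) : Dop x (sx y) = C (∑ i, x i * y i) := by
  have h : ∀ i : Fin n, C (x i) * pderiv i (sx y) = C (x i * y i) := by
    intro i; rw [pderiv_sx, ← map_mul]
  rw [Dop, Finset.sum_congr rfl fun i _ => h i, ← map_sum]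

lemma Dop_rho (x : Fin n → ℝ) : Dop x (rho n) = 2 * sx x := by
  have h : ∀ i : Fin n, C (x i) * pderiv i (rho n) = 2 * (C (x i) * X i) := by
    intro i; rw [pderiv_rho]; ring
  rw [Dop, Finset.sum_congr rfl fun i _ => h i, ← Finset.mul_sum, sx]

lemma Dop_pow_sx (x y : Fin n → ℝ) (k : ℕ) :
    Dop x (sx y ^ (k + 1)) = C ((k + 1 : ℝ) * ∑ i, x i * y i) * sx y ^ k := by
  induction k with
  | zero => rw [pow_one, pow_zero, Dop_sx]; rw [map_mul]; norm_num
  | succ k ih =>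
    rw [pow_succ, Dop_mul, ih, Dop_sx]
    push_cast
    simp only [map_add, map_mul, map_one, map_ofNat, map_natCast]
    ring

lemma Lap_add (p q : MvPolynomial (Fin n) ℝ) : Lap (p + q) = Lap p + Lap q := by
  simp [Lap, map_add, Finset.sum_add_distrib]

lemma Lap_Cmul (c : ℝ) (p : MvPolynomial (Fin n) ℝ) : Lap (C c * p) = C c * Lap p := by
  simp only [Lap, pderiv_C_mul, Finset.mul_sum]

lemma Lap_one : Lap (1 : MvPolynomial (Fin n) ℝ) = 0 := by simp [Lap]

lemma Lap_sx (x : Fin n → ℝ) : Lap (sx x) = 0 := by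
  simp [Lap, pderiv_sx]

lemma Lap_sx_mul (x : Fin n → ℝ) (p : MvPolynomial (Fin n) ℝ) :
    Lap (sx x * p) = 2 * Dop x p + sx x * Lap p := by
  have step : ∀ i : Fin n, pderiv i (pderiv i (sx x * p))
      = 2 * (C (x i) * pderiv i p) + sx x * pderiv i (pderiv i p) := by
    intro i
    rw [pderiv_mul, pderiv_sx, map_add, pderiv_mul, pderiv_mul, pderiv_sx, pderiv_C]
    ring
  simp only [Lap, Dop]
  rw [Finset.sum_congr rfl fun i _ => step i, Finset.sum_add_distrib, ← Finset.mul_sum,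
    ← Finset.mul_sum]

lemma Lap_rho_mul (p : MvPolynomial (Fin n) ℝ) :
    Lap (rho n * p) = C (2 * (n : ℝ)) * p + 4 * Eop p + rho n * Lap p := by
  have step : ∀ i : Fin n, pderiv i (pderiv i (rho n * p))
      = 2 * p + 4 * (X i * pderiv i p) + rho n * pderiv i (pderiv i p) := by
    intro i
    have h2 : pderiv i (2 : MvPolynomial (Fin n) ℝ) = 0 := by rw [two_eq_C, pderiv_C]
    simp only [pderiv_mul, map_add, pderiv_rho, pderiv_X_self, h2]
    ring
  simp only [Lap, Eop]
  rw [Finset.sum_congr rfl fun i _ => step i]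
  simp only [Finset.sum_add_distrib, Finset.sum_const, Finset.card_univ, Fintype.card_fin,
    nsmul_eq_mul, ← Finset.mul_sum]
  rw [map_mul, map_ofNat, map_natCast]
  ring

lemma Lap_pow_sx (y : Fin n → ℝ) (k : ℕ) :
    Lap (sx y ^ (k + 2)) = C ((k + 2 : ℝ) * ((k + 1 : ℝ) * ∑ i, y i * y i)) * sx y ^ k := by
  induction k with
  | zero =>
    rw [show sx y ^ 2 = sx y * sx y from sq (sx y), Lap_sx_mul, Dop_sx, Lap_sx]
    push_cast
    simp only [map_add, map_mul, map_one, map_ofNat, map_natCast, map_zero, ← pow_two]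
    ring
  | succ k ih =>
    rw [show sx y ^ (k + 3) = sx y * sx y ^ (k + 2) from (pow_succ' (sx y) (k+2))]
    rw [Lap_sx_mul, ih, Dop_pow_sx]
    push_cast
    simp only [map_add, map_mul, map_one, map_ofNat, map_natCast]
    ring

lemma Eop_Cmul (c : ℝ) (p : MvPolynomial (Fin n) ℝ) : Eop (C c * p) = C c * Eop p := by
  simp only [Eop, pderiv_C_mul, Finset.mul_sum]
  exact Finset.sum_congr rfl fun i _ => by ring

lemma Eop_mul (p q : MvPolynomial (Fin n) ℝ) : Eop (p * q) = Eop p * q + p * Eop q := by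
  simp only [Eop, pderiv_mul, mul_add, Finset.sum_add_distrib, Finset.sum_mul, Finset.mul_sum]
  congr 1
  · exact Finset.sum_congr rfl fun i _ => by ring
  · exact Finset.sum_congr rfl fun i _ => by ring

lemma Eop_one : Eop (1 : MvPolynomial (Fin n) ℝ) = 0 := by simp [Eop]

lemma Eop_sx (x : Fin n → ℝ) : Eop (sx x) = sx x := by
  have h : ∀ i : Fin n, X i * pderiv i (sx x) = C (x i) * X i := by
    intro i; rw [pderiv_sx]; ring
  rw [Eop, Finset.sum_congr rfl fun i _ => h i, sx]

lemma Eop_rho : Eop (rho n) = 2 * rho n := by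
  have h : ∀ i : Fin n, X i * pderiv i (rho n) = 2 * (X i * X i) := by
    intro i; rw [pderiv_rho]; ring
  rw [Eop, Finset.sum_congr rfl fun i _ => h i, ← Finset.mul_sum, rho]

/-- Adjointness for directional multiplication. -/
lemma Bf_adj_s (y : Fin n → ℝ) (p q : MvPolynomial (Fin n) ℝ) :
    Bf p (sx y * q) = Bf (Dop y p) q := by
  rw [sx, Finset.sum_mul, Bf_sum_right, Dop, Bf_sum_left]
  refine Finset.sum_congr rfl fun i _ => ?_
  rw [mul_assoc, Bf_Cmul_right, Bf_adj, Bf_Cmul_left]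

/-- Adjointness for multiplication by `‖w‖²`. -/
lemma Bf_adj_rho (p q : MvPolynomial (Fin n) ℝ) :
    Bf p (rho n * q) = Bf (Lap p) q := by
  rw [rho, Finset.sum_mul, Bf_sum_right, Lap, Bf_sum_left]
  refine Finset.sum_congr rfl fun i _ => ?_
  rw [mul_assoc, Bf_adj, Bf_adj]
lemma Eop_add (p q : MvPolynomial (Fin n) ℝ) : Eop (p + q) = Eop p + Eop q := by
  simp [Eop, map_add, mul_add, Finset.sum_add_distrib]

/-- The normalizing constants. -/
noncomputable def cseq (n : ℕ) : ℕ → ℝ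
  | 0 => 1
  | 1 => 1
  | (k+2) => ((k : ℝ) + 2) * ((k : ℝ) + n - 1) / (2 * (k : ℝ) + n) * cseq n (k+1)

lemma cseq_zero : cseq n 0 = 1 := rfl
lemma cseq_one : cseq n 1 = 1 := rfl
lemma cseq_ss (k : ℕ) :
    cseq n (k+2) = ((k : ℝ) + 2) * ((k : ℝ) + n - 1) / (2 * (k : ℝ) + n) * cseq n (k+1) := rfl

lemma cseq_pos (hn : 2 ≤ n) : ∀ k, 0 < cseq n k := by
  have hν : (2 : ℝ) ≤ (n : ℝ) := by exact_mod_cast hn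
  intro k
  induction k using Nat.twoStepInduction with
  | zero => norm_num [cseq_zero]
  | one => norm_num [cseq_one]
  | more k ih1 ih2 =>
    rw [cseq_ss]
    have h0 : (0:ℝ) ≤ (k:ℝ) := Nat.cast_nonneg k
    have hq : (0:ℝ) < ((k : ℝ) + 2) * ((k : ℝ) + n - 1) / (2 * (k : ℝ) + n) :=
      div_pos (mul_pos (by linarith) (by linarith)) (by linarith)
    exact mul_pos hq ih2

/-- `bet n k` is the coefficient `β_{k+2}`. -/
noncomputable def bet (n : ℕ) (k : ℕ) : ℝ :=
  -(cseq n (k+1)) / ((2 * (k : ℝ) + n) * cseq n k)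

/-- The zonal harmonic polynomials. -/
noncomputable def hpol (n : ℕ) : ℕ → (Fin n → ℝ) → MvPolynomial (Fin n) ℝ
  | 0, _ => 1
  | 1, x => sx x
  | (k+2), x => sx x * hpol n (k+1) x + C (bet n k) * (rho n * hpol n k x)

lemma hpol_zero (x : Fin n → ℝ) : hpol n 0 x = 1 := rfl
lemma hpol_one (x : Fin n → ℝ) : hpol n 1 x = sx x := rfl
lemma hpol_ss (k : ℕ) (x : Fin n → ℝ) :
    hpol n (k+2) x = sx x * hpol n (k+1) x + C (bet n k) * (rho n * hpol n k x) := rfl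

lemma euler_h (x : Fin n → ℝ) : ∀ k, Eop (hpol n k x) = C (k : ℝ) * hpol n k x := by
  intro k
  induction k using Nat.twoStepInduction with
  | zero => simp [hpol_zero, Eop_one]
  | one => simp [hpol_one, Eop_sx]
  | more k ih1 ih2 =>
    rw [hpol_ss, Eop_add, Eop_mul, Eop_Cmul, Eop_mul, Eop_sx, Eop_rho, ih1, ih2]
    push_cast
    simp only [map_add, map_mul, map_one, map_ofNat, map_natCast]
    ring

lemma bet_def (k : ℕ) :
    bet n k = -(cseq n (k+1)) / ((2 * (k : ℝ) + n) * cseq n k) := rfl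

set_option maxHeartbeats 1000000 in
lemma dop_h (hn : 2 ≤ n) {x : Fin n → ℝ} (hx : ∑ i, x i * x i = 1) :
    ∀ k, Dop x (hpol n (k+1) x) = C (cseq n (k+1) / cseq n k) * hpol n k x := by
  have hν : (2 : ℝ) ≤ (n : ℝ) := by exact_mod_cast hn
  have hn0 : (n:ℝ) ≠ 0 := by linarith
  have hc := cseq_pos hn
  intro k
  induction k using Nat.twoStepInduction with
  | zero =>
    rw [hpol_one, Dop_sx, hx, hpol_zero, cseq_one, cseq_zero]
    norm_num
  | one =>
    have e1 : (1:ℕ)+1 = 2 := rfl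
    rw [e1, hpol_ss 0 x, hpol_one, hpol_zero, Dop_add, Dop_mul, Dop_Cmul, Dop_mul, Dop_sx,
      Dop_rho, Dop_one, hx, MvPolynomial.C_1]
    have hsc : (1:ℝ) + (1 + bet n 0 * 2) = cseq n 2 / cseq n 1 := by
      have h2 : cseq n 2 = 2 * ((n:ℝ) - 1) / (n:ℝ) := by
        rw [show (2:ℕ) = 0+2 from rfl, cseq_ss 0, cseq_one]; push_cast; field_simp; ring
      have hb : bet n 0 = -1 / (n:ℝ) := by
        rw [bet_def, cseq_one, cseq_zero]; push_cast; field_simp; ring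
      rw [h2, hb, cseq_one]
      field_simp
      ring
    have hscC : (1 : MvPolynomial (Fin n) ℝ) + (1 + C (bet n 0) * 2)
        = C (cseq n 2 / cseq n 1) := by
      have h := congrArg (C : ℝ →+* MvPolynomial (Fin n) ℝ) hsc
      simpa [map_add, map_mul, map_one, map_ofNat] using h
    linear_combination hscC * sx x
  | more k ih1 ih2 =>
    have e1 : k+1+1 = k+2 := rfl
    have e2 : k+2+1 = k+3 := rfl
    have e3 : k+1+2 = k+3 := rfl
    rw [e1] at ih2
    rw [e2]
    have hh := hpol_ss (k+1) x
    rw [e3, e1] at hh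
    have hck : cseq n k ≠ 0 := ne_of_gt (hc k)
    have hck1 : cseq n (k+1) ≠ 0 := ne_of_gt (hc (k+1))
    have hck2 : cseq n (k+2) ≠ 0 := ne_of_gt (hc (k+2))
    have h0 : (0:ℝ) ≤ (k:ℝ) := Nat.cast_nonneg k
    have hd1 : (2 * (k:ℝ) + n) ≠ 0 := by nlinarith
    have hd2 : (2 * ((k:ℝ)+1) + n) ≠ 0 := by nlinarith
    have hd3 : ((k:ℝ) + 2) ≠ 0 := by nlinarith
    have hd4 : ((k:ℝ) + (n:ℝ) - 1) ≠ 0 := by nlinarith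
    have hd5 : ((k:ℝ) + 1 + (n:ℝ) - 1) ≠ 0 := by nlinarith
    have hd6 : ((k:ℝ) + 1 + 2) ≠ 0 := by nlinarith
    have hd7 : ((k:ℝ) + 3) ≠ 0 := by nlinarith
    have hr2 : cseq n (k+2) = ((k : ℝ) + 2) * ((k : ℝ) + n - 1) / (2 * (k : ℝ) + n)
        * cseq n (k+1) := cseq_ss k
    have hr3 : cseq n (k+3) = (((k:ℝ) + 1) + 2) * (((k:ℝ) + 1) + n - 1) / (2 * ((k:ℝ) + 1) + n)
        * cseq n (k+2) := by
      have h := cseq_ss (n := n) (k+1)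
      rw [e3, e1] at h
      push_cast at h
      exact h
    have hb2 : bet n (k+1) = -(cseq n (k+2)) / ((2 * ((k:ℝ)+1) + n) * cseq n (k+1)) := by
      have h := bet_def (n := n) (k+1)
      rw [e1] at h
      push_cast at h
      exact h
    have hS1 : (1:ℝ) + (cseq n (k+2) / cseq n (k+1) + bet n (k+1) * 2)
        = cseq n (k+3) / cseq n (k+2) := by
      rw [hb2, hr3, hr2]
      field_simp [hck, hck1, hd1, hd2, hd3, hd4, hd5, hd6]
      ring
    have hS2 : bet n k + bet n (k+1) * (cseq n (k+1) / cseq n k)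
        = cseq n (k+3) / cseq n (k+2) * bet n k := by
      rw [bet_def, hb2, hr3, hr2]
      field_simp [hck, hck1, hd1, hd2, hd3, hd4, hd5, hd6]
      ring
    have hC1 : (1 : MvPolynomial (Fin n) ℝ)
          + (C (cseq n (k+2) / cseq n (k+1)) + C (bet n (k+1)) * 2)
        = C (cseq n (k+3) / cseq n (k+2)) := by
      have h := congrArg (C : ℝ →+* MvPolynomial (Fin n) ℝ) hS1
      simpa [map_add, map_mul, map_one, map_ofNat] using h
    have hC2 : (C (bet n k) : MvPolynomial (Fin n) ℝ)
          + C (bet n (k+1)) * C (cseq n (k+1) / cseq n k)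
        = C (cseq n (k+3) / cseq n (k+2)) * C (bet n k) := by
      have h := congrArg (C : ℝ →+* MvPolynomial (Fin n) ℝ) hS2
      simpa [map_add, map_mul, map_one, map_ofNat] using h
    rw [hh, Dop_add, Dop_mul, Dop_Cmul, Dop_mul, Dop_sx, Dop_rho, hx, MvPolynomial.C_1, ih1,
      ih2, hpol_ss k x]
    linear_combination hC1 * (sx x * hpol n (k+1) x)
      + hC2 * (rho n * hpol n k x)
lemma lap_h (hn : 2 ≤ n) {x : Fin n → ℝ} (hx : ∑ i, x i * x i = 1) :
    ∀ k, Lap (hpol n k x) = 0 := by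
  have hν : (2 : ℝ) ≤ (n : ℝ) := by exact_mod_cast hn
  have hc := cseq_pos hn
  intro k
  induction k using Nat.twoStepInduction with
  | zero => rw [hpol_zero]; exact Lap_one
  | one => rw [hpol_one]; exact Lap_sx x
  | more k ih1 ih2 =>
    rw [hpol_ss, Lap_add, Lap_sx_mul, dop_h hn hx k, ih2, Lap_Cmul, Lap_rho_mul,
      euler_h x k, ih1]
    have hck : cseq n k ≠ 0 := ne_of_gt (hc k)
    have h0 : (0:ℝ) ≤ (k:ℝ) := Nat.cast_nonneg k
    have hd1 : (2 * (k:ℝ) + n) ≠ 0 := by nlinarith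
    have hS : 2 * (cseq n (k+1) / cseq n k) + bet n k * (2 * (n:ℝ) + 4 * (k:ℝ)) = 0 := by
      rw [bet_def]
      field_simp
      ring
    have hC : (2 : MvPolynomial (Fin n) ℝ) * C (cseq n (k+1) / cseq n k)
        + C (bet n k) * (C (2 * (n:ℝ)) + 4 * C (k:ℝ)) = 0 := by
      have h := congrArg (C : ℝ →+* MvPolynomial (Fin n) ℝ) hS
      simpa [map_add, map_mul, map_ofNat] using h
    linear_combination hC * hpol n k x

lemma lead_h (y : Fin n → ℝ) : ∀ k, ∃ r, hpol n k y = sx y ^ k + rho n * r := by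
  intro k
  induction k using Nat.twoStepInduction with
  | zero => exact ⟨0, by rw [hpol_zero]; simp⟩
  | one => exact ⟨0, by rw [hpol_one]; simp⟩
  | more k ih1 ih2 =>
    obtain ⟨r, hr⟩ := ih2
    refine ⟨sx y * r + C (bet n k) * hpol n k y, ?_⟩
    rw [hpol_ss, hr]
    ring

lemma Bf_C_one (c : ℝ) : Bf (C c : MvPolynomial (Fin n) ℝ) 1 = c := by
  rw [← mul_one (C c), Bf_Cmul_left, Bf_one_one, mul_one]

lemma geg_zero (m : ℕ) (t : ℝ) : Geg m 0 t = 1 := rfl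
lemma geg_one (m : ℕ) (t : ℝ) : Geg m 1 t = t := rfl
lemma geg_ss (m : ℕ) (k : ℕ) (t : ℝ) :
    Geg m (k+2) t = ((2 * ((k : ℝ) + 2) + m - 4) * t * Geg m (k+1) t
      - ((k : ℝ) + 1) * Geg m k t) / ((k : ℝ) + 2 + m - 3) := rfl

lemma U_h (hn : 2 ≤ n) {x y : Fin n → ℝ} (hx : ∑ i, x i * x i = 1)
    (hy : ∑ i, y i * y i = 1) :
    ∀ k, Bf (hpol n k x) (sx y ^ k) = cseq n k * Geg n k (∑ i, x i * y i) := by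
  have hν : (2 : ℝ) ≤ (n : ℝ) := by exact_mod_cast hn
  have hc := cseq_pos hn
  intro k
  induction k using Nat.twoStepInduction with
  | zero => rw [hpol_zero, pow_zero, Bf_one_one, geg_zero, cseq_zero, mul_one]
  | one =>
    rw [hpol_one, pow_one, ← mul_one (sx y), Bf_adj_s, Dop_sx, Bf_C_one, geg_one,
      cseq_one, one_mul]
    exact Finset.sum_congr rfl fun i _ => mul_comm _ _
  | more k ih1 ih2 =>
    have e1 : k+1+1 = k+2 := rfl
    have hD := Dop_pow_sx x y (k+1)
    rw [e1] at hD
    have t1 : Bf (sx x * hpol n (k+1) x) (sx y ^ (k+2))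
        = ((k:ℝ)+1+1) * (∑ i, x i * y i) * (cseq n (k+1) * Geg n (k+1) (∑ i, x i * y i)) := by
      rw [Bf_symm, Bf_adj_s, hD, Bf_Cmul_left, Bf_symm, ih2]
      push_cast
      ring
    have t2 : Bf (rho n * hpol n k x) (sx y ^ (k+2))
        = ((k:ℝ)+2) * (((k:ℝ)+1) * (cseq n k * Geg n k (∑ i, x i * y i))) := by
      rw [Bf_symm, Bf_adj_rho, Lap_pow_sx y k, Bf_Cmul_left, Bf_symm, ih1, hy]
      ring
    rw [hpol_ss, Bf_add_left, Bf_Cmul_left, t1, t2, geg_ss, cseq_ss]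
    have hck : cseq n k ≠ 0 := ne_of_gt (hc k)
    have h0 : (0:ℝ) ≤ (k:ℝ) := Nat.cast_nonneg k
    have hd1 : (2 * (k:ℝ) + n) ≠ 0 := by nlinarith
    have hd4 : ((k:ℝ) + 2 + (n:ℝ) - 3) ≠ 0 := by nlinarith
    rw [bet_def]
    field_simp
    ring

lemma bf_h_h (hn : 2 ≤ n) {x y : Fin n → ℝ} (hx : ∑ i, x i * x i = 1)
    (hy : ∑ i, y i * y i = 1) (k : ℕ) :
    Bf (hpol n k x) (hpol n k y) = cseq n k * Geg n k (∑ i, x i * y i) := by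
  obtain ⟨r, hr⟩ := lead_h y k
  rw [hr, Bf_add_right, Bf_adj_rho, lap_h hn hx k, Bf_zero_left, add_zero, U_h hn hx hy k]

end DelsarteAux

/-- Delsarte's inequality: for any finite set of unit vectors in `ℝ^n`,
the full (ordered) pair sum of any Gegenbauer polynomial of the inner products
is nonnegative. -/
theorem delsarte_inequality (n : ℕ) (hn : 2 ≤ n)
    (X : Finset (EuclideanSpace ℝ (Fin n))) (hX : ∀ x ∈ X, ‖x‖ = 1) (k : ℕ) :
    0 ≤ ∑ x ∈ X, ∑ y ∈ X, Geg n k ⟪x, y⟫_ℝ := by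
  classical
  open DelsarteAux in
  have hip : ∀ x y : EuclideanSpace ℝ (Fin n), ⟪x, y⟫_ℝ = ∑ i, x i * y i := by
    intro x y
    simp [PiLp.inner_apply, RCLike.inner_apply, conj_trivial]
    exact Finset.sum_congr rfl fun i _ => mul_comm _ _
  have hunit : ∀ x ∈ X, ∑ i, (x : EuclideanSpace ℝ (Fin n)) i * x i = 1 := by
    intro x hx
    have h1 : ⟪x, x⟫_ℝ = ‖x‖ * ‖x‖ := real_inner_self_eq_norm_mul_norm x
    rw [hip x x, hX x hx] at h1
    simpa using h1
  have hcpos := DelsarteAux.cseq_pos (n := n) hn k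
  have key : ∑ x ∈ X, ∑ y ∈ X, Geg n k ⟪x, y⟫_ℝ
      = (DelsarteAux.cseq n k)⁻¹ *
        DelsarteAux.Bf (∑ x ∈ X, DelsarteAux.hpol n k x) (∑ y ∈ X, DelsarteAux.hpol n k y) := by
    rw [DelsarteAux.Bf_sum_left, Finset.mul_sum]
    refine Finset.sum_congr rfl fun x hx => ?_
    rw [DelsarteAux.Bf_sum_right, Finset.mul_sum]
    refine Finset.sum_congr rfl fun y hy => ?_
    rw [DelsarteAux.bf_h_h hn (hunit x hx) (hunit y hy) k, hip x y]
    field_simp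
  rw [key]
  exact mul_nonneg (inv_nonneg.mpr (le_of_lt hcpos)) (DelsarteAux.Bf_self_nonneg _)
end

section
/- Let d₁, d₂, d₃ be real numbers with −1 ≤ d₁ < d₂ < d₃ < 1, define K₁, K₂, K₃ as the Lagrange-type quotients, and assume K₁ + K₂ ≠ 0. Then −K₁K₂K₃ > 0 and d₁ = (K₁ − d₃K₁K₃ − (d₃−1)√(−K₁K₂K₃)) / (K₁(K₁+K₂)) and d₂ = (K₂ − d₃K₂K₃ + (d₃−1)√(−K₁K₂K₃)) / (K₂(K₁+K₂)). -/
/-- Lagrange-type quotient `K₁`. -/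
noncomputable def K₁ (d₁ d₂ d₃ : ℝ) : ℝ := (d₂ - 1) * (d₃ - 1) / ((d₂ - d₁) * (d₃ - d₁))

/-- Lagrange-type quotient `K₂`. -/
noncomputable def K₂ (d₁ d₂ d₃ : ℝ) : ℝ := (d₁ - 1) * (d₃ - 1) / ((d₁ - d₂) * (d₃ - d₂))

/-- Lagrange-type quotient `K₃`. -/
noncomputable def K₃ (d₁ d₂ d₃ : ℝ) : ℝ := (d₁ - 1) * (d₂ - 1) / ((d₁ - d₃) * (d₂ - d₃))

set_option maxHeartbeats 2000000 in
theorem d₁_d₂_formula (d₁ d₂ d₃ : ℝ)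
    (h₁ : -1 ≤ d₁) (h₁₂ : d₁ < d₂) (h₂₃ : d₂ < d₃) (h₃ : d₃ < 1)
    (hK : K₁ d₁ d₂ d₃ + K₂ d₁ d₂ d₃ ≠ 0) :
    0 < -(K₁ d₁ d₂ d₃ * K₂ d₁ d₂ d₃ * K₃ d₁ d₂ d₃) ∧
    d₁ = (K₁ d₁ d₂ d₃ - d₃ * K₁ d₁ d₂ d₃ * K₃ d₁ d₂ d₃ -
          (d₃ - 1) * Real.sqrt (-(K₁ d₁ d₂ d₃ * K₂ d₁ d₂ d₃ * K₃ d₁ d₂ d₃))) /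
        (K₁ d₁ d₂ d₃ * (K₁ d₁ d₂ d₃ + K₂ d₁ d₂ d₃)) ∧
    d₂ = (K₂ d₁ d₂ d₃ - d₃ * K₂ d₁ d₂ d₃ * K₃ d₁ d₂ d₃ +
          (d₃ - 1) * Real.sqrt (-(K₁ d₁ d₂ d₃ * K₂ d₁ d₂ d₃ * K₃ d₁ d₂ d₃))) /
        (K₂ d₁ d₂ d₃ * (K₁ d₁ d₂ d₃ + K₂ d₁ d₂ d₃)) := by
  have hd21 : (0:ℝ) < d₂ - d₁ := by linarith
  have hd31 : (0:ℝ) < d₃ - d₁ := by linarith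
  have hd32 : (0:ℝ) < d₃ - d₂ := by linarith
  have h1n : d₁ - 1 < 0 := by linarith
  have h2n : d₂ - 1 < 0 := by linarith
  have h3n : d₃ - 1 < 0 := by linarith
  have e21 : d₂ - d₁ ≠ 0 := hd21.ne'
  have e31 : d₃ - d₁ ≠ 0 := hd31.ne'
  have e32 : d₃ - d₂ ≠ 0 := hd32.ne'
  have e12 : d₁ - d₂ ≠ 0 := sub_ne_zero.mpr h₁₂.ne
  have e13 : d₁ - d₃ ≠ 0 := sub_ne_zero.mpr (by linarith : d₁ ≠ d₃)
  have e23 : d₂ - d₃ ≠ 0 := sub_ne_zero.mpr h₂₃.ne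
  set Q : ℝ := -((d₁ - 1) * (d₂ - 1) * (d₃ - 1)) / ((d₂ - d₁) * (d₃ - d₁) * (d₃ - d₂)) with hQ
  have hQpos : 0 < Q := by
    apply div_pos (by nlinarith [mul_pos (mul_pos (by linarith : (0:ℝ) < 1-d₁) (by linarith : (0:ℝ) < 1-d₂)) (by linarith : (0:ℝ) < 1-d₃)]) (by positivity)
  have hsq : -(K₁ d₁ d₂ d₃ * K₂ d₁ d₂ d₃ * K₃ d₁ d₂ d₃) = Q ^ 2 := by
    rw [hQ]
    unfold K₁ K₂ K₃
    field_simp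
    ring
  have hsqrt : Real.sqrt (-(K₁ d₁ d₂ d₃ * K₂ d₁ d₂ d₃ * K₃ d₁ d₂ d₃)) = Q := by
    rw [hsq, Real.sqrt_sq hQpos.le]
  have hK1 : K₁ d₁ d₂ d₃ ≠ 0 := by
    unfold K₁
    have : (0:ℝ) < (d₂ - 1) * (d₃ - 1) := by nlinarith
    positivity
  have hK2 : K₂ d₁ d₂ d₃ ≠ 0 := by
    unfold K₂
    apply ne_of_lt
    apply div_neg_of_pos_of_neg (by nlinarith) (by nlinarith)
  refine ⟨by rw [hsq]; positivity, ?_, ?_⟩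
  · rw [hsqrt, eq_div_iff (mul_ne_zero hK1 hK)]
    unfold K₁ K₂ K₃ at *
    rw [hQ]
    field_simp
    ring
  · rw [hsqrt, eq_div_iff (mul_ne_zero hK2 hK)]
    unfold K₁ K₂ K₃ at *
    rw [hQ]
    field_simp
    ring
end
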